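/- Let H_U^Γ ∈ ℝ^{m_U×m_U} and H_V^Γ ∈ ℝ^{m_V×m_V} be symmetric positive definite, let M_U ∈ ℝ^{n_U×n_U} and M_V ∈ ℝ^{n_V×n_V} be symmetric, let e_E, d_E ∈ ℝ^{n_U×m_U}, e_W, d_W ∈ ℝ^{n_V×m_V}, I_{v2u}^g ∈ ℝ^{m_U×m_V}, I_{u2v}^g ∈ ℝ^{m_V×m_U}, and suppose the borrowing decompositions M_U = h_u γ_u d_E H_U^Γ d_Eᵀ + M̃_U and M_V = h_v γ_v d_W H_V^Γ d_Wᵀ + M̃_V hold with h_u, h_v, γ_u, γ_v > 0 and M̃_U, M̃_V symmetric positive semidefinite. Let c₁², c₂² > 0 and let τ_u ≥ 1/(4γ_u), τ_v ≥ 1/(4γ_v). Then for all vectors u̇ ∈ ℝ^{n_U}, v̇ ∈ ℝ^{n_V}, u ∈ ℝ^{n_U}, v ∈ ℝ^{n_V}, the discrete energy E = (1/2)[ u̇ᵀH_U u̇ + v̇ᵀH_V v̇ + c₁² uᵀM_U u + c₂² vᵀM_V v + c₁² A_u + c₂² A_v ] is nonnegative, where H_U, H_V are symmetric positive definite, A_u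 = (τ_u/h_u)(e_Eᵀu − I_{v2u}^g e_Wᵀv)ᵀH_U^Γ(e_Eᵀu − I_{v2u}^g e_Wᵀv) − (d_Eᵀu)ᵀH_U^Γ(e_Eᵀu − I_{v2u}^g e_Wᵀv), and A_v = (τ_v/h_v)(e_Wᵀv − I_{u2v}^g e_Eᵀu)ᵀH_V^Γ(e_Wᵀv − I_{u2v}^g e_Eᵀu) − (d_Wᵀv)ᵀH_V^Γ(e_Wᵀv − I_{u2v}^g e_Eᵀu). -/

import Mathlib

open Matrix

lemma quad_form {n m : ℕ} (A : Matrix (Fin n) (Fin m) ℝ) (B : Matrix (Fin m) (Fin m) ℝ)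
    (u : Fin n → ℝ) :
    u ⬝ᵥ (A * B * Aᵀ) *ᵥ u = (Aᵀ *ᵥ u) ⬝ᵥ B *ᵥ (Aᵀ *ᵥ u) := by
  rw [Matrix.mulVec_transpose, Matrix.dotProduct_mulVec, ← Matrix.vecMul_vecMul,
    ← Matrix.vecMul_vecMul, Matrix.vecMul_transpose, dotProduct_comm,
    Matrix.dotProduct_mulVec]
  rw [dotProduct_comm, ← Matrix.dotProduct_mulVec]

lemma symm_dp {m : ℕ} (H : Matrix (Fin m) (Fin m) ℝ) (hH : H.PosSemidef) (w η : Fin m → ℝ) :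
    w ⬝ᵥ H *ᵥ η = η ⬝ᵥ H *ᵥ w := by
  rw [Matrix.dotProduct_mulVec, ← Matrix.mulVec_transpose]
  rw [show Hᵀ = H from hH.1]
  exact dotProduct_comm _ _

lemma psd_dp {m : ℕ} (H : Matrix (Fin m) (Fin m) ℝ) (hH : H.PosSemidef) (x : Fin m → ℝ) :
    0 ≤ x ⬝ᵥ H *ᵥ x := by simpa using hH.dotProduct_mulVec_nonneg x

lemma key {m : ℕ} (H : Matrix (Fin m) (Fin m) ℝ) (hH : H.PosSemidef)
    (a b : ℝ) (ha : 0 < a) (hb : 1 / (4 * a) ≤ b) (w η : Fin m → ℝ) :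
    0 ≤ a * (w ⬝ᵥ H *ᵥ w) + b * (η ⬝ᵥ H *ᵥ η) - w ⬝ᵥ H *ᵥ η := by
  have h0 := hH.dotProduct_mulVec_nonneg ((2 * a) • w - η)
  have hη := psd_dp H hH η
  simp only [star_trivial, Matrix.mulVec_sub, Matrix.mulVec_smul, dotProduct_sub,
    sub_dotProduct, smul_dotProduct, dotProduct_smul,
    smul_eq_mul] at h0
  rw [symm_dp H hH η w] at h0
  have hb' : 1 ≤ 4 * a * b := by
    rw [div_le_iff₀ (by positivity)] at hb; linarith
  nlinarith [psd_dp H hH w, mul_pos ha ha]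

/-- Nonnegativity of the discrete wave-equation energy: under the borrowing decompositions
`M_U = h_u γ_u d_E H_U^Γ d_Eᵀ + M̃_U` and `M_V = h_v γ_v d_W H_V^Γ d_Wᵀ + M̃_V` with `M̃_U`,
`M̃_V` positive semidefinite, and penalty parameters `τ_u ≥ 1/(4γ_u)`, `τ_v ≥ 1/(4γ_v)`,
the discrete energy `E` is nonnegative for all states. -/
theorem stmt9 {nU nV mU mV : ℕ}
    (HUΓ : Matrix (Fin mU) (Fin mU) ℝ) (HVΓ : Matrix (Fin mV) (Fin mV) ℝ)
    (hHUΓ : HUΓ.PosDef) (hHVΓ : HVΓ.PosDef)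
    (MU : Matrix (Fin nU) (Fin nU) ℝ) (MV : Matrix (Fin nV) (Fin nV) ℝ)
    (hMU : MU.IsSymm) (hMV : MV.IsSymm)
    (eE dE : Matrix (Fin nU) (Fin mU) ℝ) (eW dW : Matrix (Fin nV) (Fin mV) ℝ)
    (Ivug : Matrix (Fin mU) (Fin mV) ℝ) (Iuvg : Matrix (Fin mV) (Fin mU) ℝ)
    (hu hv γu γv : ℝ) (hhu : 0 < hu) (hhv : 0 < hv) (hγu : 0 < γu) (hγv : 0 < γv)
    (MtU : Matrix (Fin nU) (Fin nU) ℝ) (MtV : Matrix (Fin nV) (Fin nV) ℝ)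
    (hMtU : MtU.PosSemidef) (hMtV : MtV.PosSemidef)
    (hborrowU : MU = (hu * γu) • (dE * HUΓ * dEᵀ) + MtU)
    (hborrowV : MV = (hv * γv) • (dW * HVΓ * dWᵀ) + MtV)
    (c1sq c2sq : ℝ) (hc1 : 0 < c1sq) (hc2 : 0 < c2sq)
    (τu τv : ℝ) (hτu : 1 / (4 * γu) ≤ τu) (hτv : 1 / (4 * γv) ≤ τv)
    (HU : Matrix (Fin nU) (Fin nU) ℝ) (HV : Matrix (Fin nV) (Fin nV) ℝ)
    (hHU : HU.PosDef) (hHV : HV.PosDef) :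
    ∀ (du : Fin nU → ℝ) (dv : Fin nV → ℝ) (u : Fin nU → ℝ) (v : Fin nV → ℝ),
      0 ≤ (1 / 2 : ℝ) *
        (du ⬝ᵥ HU *ᵥ du + dv ⬝ᵥ HV *ᵥ dv
          + c1sq * (u ⬝ᵥ MU *ᵥ u) + c2sq * (v ⬝ᵥ MV *ᵥ v)
          + c1sq *
              ((τu / hu) *
                  ((eEᵀ *ᵥ u - Ivug *ᵥ (eWᵀ *ᵥ v)) ⬝ᵥ
                    HUΓ *ᵥ (eEᵀ *ᵥ u - Ivug *ᵥ (eWᵀ *ᵥ v)))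
                - (dEᵀ *ᵥ u) ⬝ᵥ HUΓ *ᵥ (eEᵀ *ᵥ u - Ivug *ᵥ (eWᵀ *ᵥ v)))
          + c2sq *
              ((τv / hv) *
                  ((eWᵀ *ᵥ v - Iuvg *ᵥ (eEᵀ *ᵥ u)) ⬝ᵥ
                    HVΓ *ᵥ (eWᵀ *ᵥ v - Iuvg *ᵥ (eEᵀ *ᵥ u)))
                - (dWᵀ *ᵥ v) ⬝ᵥ HVΓ *ᵥ (eWᵀ *ᵥ v - Iuvg *ᵥ (eEᵀ *ᵥ u)))) := by
  intro du dv u v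
  have hU1 : u ⬝ᵥ MU *ᵥ u
      = hu * γu * ((dEᵀ *ᵥ u) ⬝ᵥ HUΓ *ᵥ (dEᵀ *ᵥ u)) + u ⬝ᵥ MtU *ᵥ u := by
    rw [hborrowU]
    simp [Matrix.add_mulVec, Matrix.smul_mulVec, dotProduct_add,
      dotProduct_smul, quad_form, smul_eq_mul]
  have hV1 : v ⬝ᵥ MV *ᵥ v
      = hv * γv * ((dWᵀ *ᵥ v) ⬝ᵥ HVΓ *ᵥ (dWᵀ *ᵥ v)) + v ⬝ᵥ MtV *ᵥ v := by
    rw [hborrowV]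
    simp [Matrix.add_mulVec, Matrix.smul_mulVec, dotProduct_add,
      dotProduct_smul, quad_form, smul_eq_mul]
  have kU := key HUΓ hHUΓ.posSemidef (hu * γu) (τu / hu) (by positivity)
    (by rw [div_le_div_iff₀ (by positivity) hhu]; rw [div_le_iff₀ (by positivity)] at hτu; nlinarith)
    (dEᵀ *ᵥ u) (eEᵀ *ᵥ u - Ivug *ᵥ (eWᵀ *ᵥ v))
  have kV := key HVΓ hHVΓ.posSemidef (hv * γv) (τv / hv) (by positivity)
    (by rw [div_le_div_iff₀ (by positivity) hhv]; rw [div_le_iff₀ (by positivity)] at hτv; nlinarith)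
    (dWᵀ *ᵥ v) (eWᵀ *ᵥ v - Iuvg *ᵥ (eEᵀ *ᵥ u))
  have k1 := psd_dp HU hHU.posSemidef du
  have k2 := psd_dp HV hHV.posSemidef dv
  have k3 := psd_dp MtU hMtU u
  have k4 := psd_dp MtV hMtV v
  rw [hU1, hV1]
  nlinarith [mul_nonneg hc1.le kU, mul_nonneg hc2.le kV,
    mul_nonneg hc1.le k3, mul_nonneg hc2.le k4]
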